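/- Over the field ℂ of complex numbers, let U₁³ be the MSC with rows (1,0,0,0,0,0,0,0,1), (0,1,0,1,0,1,0,−1,0), (0,0,1,0,0,0,1,0,0), and let A be the MSC As₂³(3)(1), with rows (1,0,0,0,1,1,0,1,1), (0,1,0,1,0,−1,0,1,0), (0,0,1,0,0,1,1,−1,0). Then the matrix g with rows (1,0,0), (0,−1,0), (0,1,−1) is invertible and satisfies U₁³ = g⁻¹ A (g ⊗ g); hence the complex algebras U₁³ and As₂³(3)(1) are isomorphic. -/

import Mathlib

open Matrix Kronecker

/-- Reinterpret a `3 × 9` matrix as an MSC in `M_{3×3²}(F)`, the nine columns being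
indexed by the pairs `(1,1),(1,2),(1,3),(2,1),(2,2),(2,3),(3,1),(3,2),(3,3)`
in lexicographic order. -/
def toMsc3 {F : Type*} [Field F] (M : Matrix (Fin 3) (Fin 9) F) :
    Matrix (Fin 3) (Fin 3 × Fin 3) F :=
  Matrix.of fun i p => M i ⟨(p.2 : ℕ) + 3 * (p.1 : ℕ), by omega⟩

private lemma toMsc3_U :
    toMsc3 (F := ℂ) !![1,0,0,0,0,0,0,0,1; 0,1,0,1,0,1,0,-1,0; 0,0,1,0,0,0,1,0,0] =
      Matrix.of fun i (p : Fin 3 × Fin 3) =>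
        ![![![1,0,0],![0,0,0],![0,0,1]],
          ![![0,1,0],![1,0,1],![0,-1,0]],
          ![![0,0,1],![0,0,0],![1,0,0]]] i p.1 p.2 := by
  ext i ⟨p1, p2⟩
  fin_cases i <;> fin_cases p1 <;> fin_cases p2 <;> rfl

private lemma toMsc3_A :
    toMsc3 (F := ℂ) !![1,0,0,0,1,1,0,1,1; 0,1,0,1,0,-1,0,1,0; 0,0,1,0,0,1,1,-1,0] =
      Matrix.of fun i (p : Fin 3 × Fin 3) =>
        ![![![1,0,0],![0,1,1],![0,1,1]],
          ![![0,1,0],![1,0,-1],![0,1,0]],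
          ![![0,0,1],![0,0,1],![1,-1,0]]] i p.1 p.2 := by
  ext i ⟨p1, p2⟩
  fin_cases i <;> fin_cases p1 <;> fin_cases p2 <;> rfl

/-- Over `ℂ`, the matrix `g` with rows `(1,0,0), (0,−1,0), (0,1,−1)` is invertible and
satisfies `U₁³ = g⁻¹ ⬝ As₂³(3)(1) ⬝ (g ⊗ g)`; hence the complex algebras `U₁³` and
`As₂³(3)(1)` are isomorphic. -/
theorem U13_iso_As23_one :
    IsUnit (!![1,0,0; 0,-1,0; 0,1,-1] : Matrix (Fin 3) (Fin 3) ℂ) ∧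
      toMsc3 (F := ℂ) !![1,0,0,0,0,0,0,0,1; 0,1,0,1,0,1,0,-1,0; 0,0,1,0,0,0,1,0,0] =
        (!![1,0,0; 0,-1,0; 0,1,-1] : Matrix (Fin 3) (Fin 3) ℂ)⁻¹ *
          toMsc3 (F := ℂ) !![1,0,0,0,1,1,0,1,1; 0,1,0,1,0,-1,0,1,0; 0,0,1,0,0,1,1,-1,0] *
          ((!![1,0,0; 0,-1,0; 0,1,-1] : Matrix (Fin 3) (Fin 3) ℂ) ⊗ₖ
            (!![1,0,0; 0,-1,0; 0,1,-1] : Matrix (Fin 3) (Fin 3) ℂ)) := by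
  have hinv : (!![1,0,0; 0,-1,0; 0,1,-1] : Matrix (Fin 3) (Fin 3) ℂ)⁻¹ =
      !![1,0,0; 0,-1,0; 0,-1,-1] := by
    apply Matrix.inv_eq_right_inv
    norm_num [Matrix.mul_fin_three, ← Matrix.one_fin_three]
  constructor
  · rw [Matrix.isUnit_iff_isUnit_det, Matrix.det_fin_three]
    norm_num [Matrix.cons_val_two, Matrix.cons_val_one, Matrix.cons_val_zero, Matrix.vecHead, Matrix.vecTail]
  · rw [hinv, toMsc3_U, toMsc3_A]
    ext i ⟨p1, p2⟩
    fin_cases i <;> fin_cases p1 <;> fin_cases p2 <;>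
      simp only [Matrix.mul_apply, Fintype.sum_prod_type, Fin.sum_univ_three,
        Matrix.kroneckerMap_apply, Matrix.of_apply, Matrix.cons_val_zero,
        Matrix.cons_val_one, Matrix.head_cons, Matrix.cons_val_two, Matrix.tail_cons,
        Matrix.head_fin_const, Matrix.cons_val', Matrix.empty_val',
        Matrix.cons_val_fin_one] <;>
    norm_num
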